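/- If both k and ℓ are even, then in every 2-colouring of the edges of K_{k+ℓ-1}, either there is a red star with k edges or a blue star with ℓ edges; moreover there is a 2-colouring of K_{k+ℓ-2} with neither. Hence R(K_{1,k}, K_{1,ℓ}) = k+ℓ-1 for even k and ℓ. -/

import Mathlib

private lemma star_of_degree {V : Type*} [Fintype V] (G : SimpleGraph V) [DecidableRel G.Adj]
    (v : V) (m : ℕ) (h : m ≤ G.degree v) :
    ∃ f : completeBipartiteGraph (Fin 1) (Fin m) →g G, Function.Injective f := by
  have hc : Fintype.card (Fin m) ≤ Fintype.card (G.neighborSet v) := by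
    rwa [Fintype.card_fin, G.card_neighborSet_eq_degree]
  obtain ⟨emb⟩ := Function.Embedding.nonempty_of_card_le hc
  have hadj : ∀ i : Fin m, G.Adj v ((emb i : G.neighborSet v) : V) := fun i => (emb i).2
  refine ⟨⟨fun x => Sum.elim (fun _ => v) (fun i => ((emb i : G.neighborSet v) : V)) x, ?_⟩, ?_⟩
  · rintro (a | a) (b | b) hab
    · exact absurd hab (by simp)
    · exact hadj b
    · exact (hadj a).symm
    · exact absurd hab (by simp)
  · rintro (a | a) (b | b) hab
    · exact congrArg Sum.inl (Subsingleton.elim a b)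
    · exact ((hadj b).ne hab).elim
    · exact ((hadj a).ne hab.symm).elim
    · exact congrArg Sum.inr (emb.injective (Subtype.ext hab))

private lemma star_neighbors {V : Type*} {m : ℕ} {G : SimpleGraph V}
    (f : completeBipartiteGraph (Fin 1) (Fin m) →g G) (hf : Function.Injective f) :
    (∀ i : Fin m, G.Adj (f (Sum.inl 0)) (f (Sum.inr i))) ∧
      Function.Injective (fun i : Fin m => f (Sum.inr i)) := by
  constructor
  · intro i
    exact f.map_adj (by simp)
  · intro i j h
    exact Sum.inr_injective (hf h)

theorem stmt_11 (k ℓ : ℕ) (hk : 1 ≤ k) (hℓ : 1 ≤ ℓ)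
    (hke : Even k) (hℓe : Even ℓ) :
    (∀ R : SimpleGraph (Fin (k + ℓ - 1)),
      (∃ f : completeBipartiteGraph (Fin 1) (Fin k) →g R, Function.Injective f) ∨
      (∃ f : completeBipartiteGraph (Fin 1) (Fin ℓ) →g Rᶜ, Function.Injective f)) ∧
    (∃ R : SimpleGraph (Fin (k + ℓ - 2)),
      (¬ ∃ f : completeBipartiteGraph (Fin 1) (Fin k) →g R, Function.Injective f) ∧
      (¬ ∃ f : completeBipartiteGraph (Fin 1) (Fin ℓ) →g Rᶜ, Function.Injective f)) := by
  classical
  obtain ⟨a, ha⟩ := hke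
  obtain ⟨b, hb⟩ := hℓe
  constructor
  · -- upper bound
    intro R
    by_contra hcon
    push_neg at hcon
    obtain ⟨h1, h2⟩ := hcon
    have hdR : ∀ v, R.degree v ≤ k - 1 := by
      intro v
      by_contra h
      obtain ⟨f, hf⟩ := star_of_degree R v k (by omega)
      exact h1 f hf
    have hdC : ∀ v, Rᶜ.degree v ≤ ℓ - 1 := by
      intro v
      by_contra h
      obtain ⟨f, hf⟩ := star_of_degree Rᶜ v ℓ (by omega)
      exact h2 f hf
    have hdeg : ∀ v, Rᶜ.degree v = (k + ℓ - 1) - 1 - R.degree v := by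
      intro v
      rw [R.degree_compl, Fintype.card_fin]
    have hreg : ∀ v, R.degree v = k - 1 := by
      intro v
      have := hdR v; have := hdC v; have := hdeg v
      have hlt : R.degree v < k + ℓ - 1 := by
        have := R.degree_lt_card_verts v
        rwa [Fintype.card_fin] at this
      omega
    have hsum := R.sum_degrees_eq_twice_card_edges
    rw [Finset.sum_congr rfl (fun v _ => hreg v), Finset.sum_const, smul_eq_mul,
      Finset.card_univ, Fintype.card_fin] at hsum
    have hm : ((k + ℓ - 1) * (k - 1)) % 2 = 1 := by
      rw [Nat.mul_mod, show (k + ℓ - 1) % 2 = 1 by omega, show (k - 1) % 2 = 1 by omega]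
    rw [hsum] at hm
    omega
  · -- lower bound construction
    set n' := k + ℓ - 2 with hn'
    haveI : NeZero n' := ⟨by omega⟩
    -- circulant graph on ZMod n'
    set G : SimpleGraph (ZMod n') :=
      { Adj := fun x y => x ≠ y ∧ (((x - y).val < k / 2) ∨ (n' - k / 2 < (x - y).val))
        symm := by
          constructor
          intro x y hxy
          obtain ⟨hne, hcond⟩ := hxy
          refine ⟨hne.symm, ?_⟩
          have hz : x - y ≠ 0 := sub_ne_zero_of_ne hne
          have hv : (y - x).val = n' - (x - y).val := by
            have : y - x = -(x - y) := by ring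
            rw [this, ZMod.neg_val, if_neg hz]
          have h1 : 1 ≤ (x - y).val := by
            rcases Nat.eq_zero_or_pos (x - y).val with h | h
            · exact absurd ((ZMod.val_eq_zero _).mp h) hz
            · omega
          have h2 : (x - y).val < n' := ZMod.val_lt _
          rw [hv]
          omega
        loopless := ⟨fun x h => h.1 rfl⟩ } with hG
    have e : Fin n' ≃ ZMod n' :=
      { toFun := fun i => (i : ℕ)
        invFun := fun x => ⟨x.val, x.val_lt⟩
        left_inv := fun i => by
          ext
          simp [ZMod.val_cast_of_lt i.2]
        right_inv := fun x => by
          simp [ZMod.natCast_rightInverse x] }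
    refine ⟨G.comap e, ?_, ?_⟩
    · rintro ⟨f, hf⟩
      obtain ⟨hadj, hinj⟩ := star_neighbors f hf
      set c := e (f (Sum.inl 0)) with hc
      have hmem : ∀ i : Fin k,
          (e (f (Sum.inr i)) - c).val ∈
            Finset.Ico 1 (k / 2) ∪ Finset.Ioo (n' - k / 2) n' := by
        intro i
        have h := hadj i
        -- h : G.Adj (e (f (inl 0))) (e (f (inr i)))
        obtain ⟨hne, hcond⟩ := h
        have hz : e (f (Sum.inr i)) - c ≠ 0 := sub_ne_zero_of_ne (fun h => hne (h.symm))
        have h1 : 1 ≤ (e (f (Sum.inr i)) - c).val := by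
          rcases Nat.eq_zero_or_pos (e (f (Sum.inr i)) - c).val with h | h
          · exact absurd ((ZMod.val_eq_zero _).mp h) hz
          · omega
        have h2 : (e (f (Sum.inr i)) - c).val < n' := ZMod.val_lt _
        have hneg : (c - e (f (Sum.inr i))).val = n' - (e (f (Sum.inr i)) - c).val := by
          have heq : c - e (f (Sum.inr i)) = -(e (f (Sum.inr i)) - c) := by ring
          rw [heq, ZMod.neg_val, if_neg hz]
        rw [hneg] at hcond
        simp only [Finset.mem_union, Finset.mem_Ico, Finset.mem_Ioo]
        omega
      have hinj2 : Set.InjOn (fun i : Fin k => (e (f (Sum.inr i)) - c).val)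
          (Finset.univ : Finset (Fin k)) := by
        intro i _ j _ h
        have := ZMod.val_injective n' h
        have := sub_left_injective this
        exact hinj (e.injective this)
      have hcard := Finset.card_le_card_of_injOn _ (fun i _ => hmem i) hinj2
      rw [Finset.card_univ, Fintype.card_fin] at hcard
      have hub := Finset.card_union_le (Finset.Ico 1 (k / 2)) (Finset.Ioo (n' - k / 2) n')
      rw [Nat.card_Ico, Nat.card_Ioo] at hub
      omega
    · rintro ⟨f, hf⟩
      obtain ⟨hadj, hinj⟩ := star_neighbors f hf
      set c := e (f (Sum.inl 0)) with hc
      have hmem : ∀ i : Fin ℓ,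
          (c - e (f (Sum.inr i))).val ∈ Finset.Icc (k / 2) (n' - k / 2) := by
        intro i
        have h := hadj i
        rw [SimpleGraph.compl_adj] at h
        obtain ⟨hne, hnadj⟩ := h
        have hne' : c ≠ e (f (Sum.inr i)) := fun h => hne (e.injective h)
        have hnadj' : ¬ (c ≠ e (f (Sum.inr i)) ∧
            (((c - e (f (Sum.inr i))).val < k / 2) ∨
              (n' - k / 2 < (c - e (f (Sum.inr i))).val))) := hnadj
        have hcond : ¬ (((c - e (f (Sum.inr i))).val < k / 2) ∨
            (n' - k / 2 < (c - e (f (Sum.inr i))).val)) := fun h => hnadj' ⟨hne', h⟩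
        simp only [Finset.mem_Icc]
        omega
      have hinj2 : Set.InjOn (fun i : Fin ℓ => (c - e (f (Sum.inr i))).val)
          (Finset.univ : Finset (Fin ℓ)) := by
        intro i _ j _ h
        have h' : (c - e (f (Sum.inr i))).val = (c - e (f (Sum.inr j))).val := h
        have h2 := ZMod.val_injective n' h'
        have h3 : e (f (Sum.inr i)) = e (f (Sum.inr j)) := sub_right_inj.mp h2
        exact hinj (e.injective h3)
      have hcard := Finset.card_le_card_of_injOn _ (fun i _ => hmem i) hinj2
      rw [Finset.card_univ, Fintype.card_fin, Nat.card_Icc] at hcard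
      omega
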